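/- In the two-nest case with nest 1 containing two elements of weights x, y > 0 and nest parameter μ ∈ (0,1], and nest 2 containing a single element of weight w > 0 (with nest parameter 1), the ratio of probabilities P(x-element)/P(w-element) = x^{1/μ}(x^{1/μ}+y^{1/μ})^{μ−1}/w is strictly decreasing in y when μ < 1, and is independent of y when μ = 1. -/
import Mathlib

/-- Relaxation of IIA in the two-nest example: the ratio
`x^{1/μ}(x^{1/μ}+y^{1/μ})^{μ-1}/w` is strictly decreasing in `y` when `μ < 1`, and
independent of `y` when `μ = 1`. -/
theorem nested_ratio_monotone (x w μ : ℝ) (hx : 0 < x) (hw : 0 < w)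
    (hμ0 : 0 < μ) (hμ1 : μ ≤ 1) :
    (μ < 1 → StrictAntiOn
      (fun y : ℝ => x ^ (1 / μ) * (x ^ (1 / μ) + y ^ (1 / μ)) ^ (μ - 1) / w)
      (Set.Ioi 0)) ∧
    (μ = 1 → ∀ y : ℝ, 0 < y → ∀ y' : ℝ, 0 < y' →
      x ^ (1 / μ) * (x ^ (1 / μ) + y ^ (1 / μ)) ^ (μ - 1) / w
        = x ^ (1 / μ) * (x ^ (1 / μ) + y' ^ (1 / μ)) ^ (μ - 1) / w) := by
  have ha : 0 < x ^ (1 / μ) := Real.rpow_pos_of_pos hx _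
  constructor
  · intro hμ y hy y' hy' hlt
    simp only [Set.mem_Ioi] at hy hy'
    have h1 : y ^ (1 / μ) < y' ^ (1 / μ) :=
      Real.rpow_lt_rpow hy.le hlt (by positivity)
    have h2 : (0:ℝ) < x ^ (1 / μ) + y ^ (1 / μ) := by
      have := Real.rpow_pos_of_pos hy (1 / μ); linarith
    have h3 : (x ^ (1 / μ) + y' ^ (1 / μ)) ^ (μ - 1)
        < (x ^ (1 / μ) + y ^ (1 / μ)) ^ (μ - 1) :=
      Real.rpow_lt_rpow_of_neg h2 (by linarith) (by linarith)
    have := mul_lt_mul_of_pos_left h3 ha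
    simpa using div_lt_div_of_pos_right this hw
  · intro hμ y hy y' hy'
    simp [hμ]
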